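/- Let $A\subseteq[0,1]^d$ be a regular Borel set (i.e. $\lambda(\partial A)=0$) with $\lambda(A)>0$, let $\Gamma_n(A)=nA\cap\mathbb{Z}^d$ and $\partial\Gamma_n(A)=\{i\in\Gamma_n(A): \exists j\notin\Gamma_n(A), |i-j|=1\}$. Then $|\partial\Gamma_n(A)|/|\Gamma_n(A)|\to 0$ as $n\to\infty$. -/

import Mathlib

open MeasureTheory Filter Pointwise Metric Set Bornology ENNReal NNReal

private lemma aux_finite {d : ℕ} {S : Set (Fin d → ℝ)} (hS : IsBounded S) :
    {i : Fin d → ℤ | (fun k => (i k : ℝ)) ∈ S}.Finite := by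
  obtain ⟨R, hR⟩ := hS.subset_closedBall 0
  refine Set.Finite.subset (Set.finite_Icc (fun _ => (-⌈R⌉ : ℤ)) fun _ => ⌈R⌉) ?_
  intro i hi
  have h1 : dist (fun k => (i k : ℝ)) 0 ≤ R := hR hi
  have h2 : ∀ k, |(i k : ℝ)| ≤ R := by
    intro k
    have := dist_le_pi_dist (fun k => (i k : ℝ)) 0 k
    simpa [Real.dist_eq] using this.trans h1
  have h3 : (R : ℝ) ≤ (⌈R⌉ : ℝ) := Int.le_ceil R
  constructor <;> intro k
  · have h4 : ((-⌈R⌉ : ℤ) : ℝ) ≤ (i k : ℝ) := by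
      have := (abs_le.mp (h2 k)).1
      push_cast
      linarith
    simpa using Int.cast_le.mp h4
  · have h4 : ((i k : ℤ) : ℝ) ≤ ((⌈R⌉ : ℤ) : ℝ) := by
      have := (abs_le.mp (h2 k)).2
      push_cast
      linarith
    exact_mod_cast h4

private lemma aux_card_le {d : ℕ} {S : Set (Fin d → ℝ)} (hb : IsBounded S) :
    (Nat.card {i : Fin d → ℤ | (fun k => (i k : ℝ)) ∈ S} : ℝ≥0∞)
      ≤ volume (Metric.cthickening 1 S) := by
  classical
  have hfin := aux_finite hb
  set Γ := {i : Fin d → ℤ | (fun k => (i k : ℝ)) ∈ S}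
  set C : (Fin d → ℤ) → Set (Fin d → ℝ) :=
    fun i => Set.pi Set.univ fun k => Set.Ico ((i k : ℝ)) (i k + 1) with hC
  have hvol : ∀ i, volume (C i) = 1 := by
    intro i
    rw [hC]
    simp [MeasureTheory.volume_pi_pi, Real.volume_Ico]
  have hmeas : ∀ i, MeasurableSet (C i) := fun i =>
    MeasurableSet.univ_pi fun k => measurableSet_Ico
  have hdisj : (↑hfin.toFinset : Set (Fin d → ℤ)).PairwiseDisjoint C := by
    intro i _ j _ hij
    refine Set.disjoint_left.mpr fun x hxi hxj => hij ?_
    funext k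
    have h1 := (Set.mem_univ_pi.mp hxi) k
    have h2 := (Set.mem_univ_pi.mp hxj) k
    have e1 : ⌊x k⌋ = i k := Int.floor_eq_iff.mpr ⟨h1.1, by push_cast; exact h1.2⟩
    have e2 : ⌊x k⌋ = j k := Int.floor_eq_iff.mpr ⟨h2.1, by push_cast; exact h2.2⟩
    rw [← e1, e2]
  have hsub : ∀ i ∈ hfin.toFinset, C i ⊆ Metric.cthickening 1 S := by
    intro i hi
    have hiS : (fun k => (i k : ℝ)) ∈ S := by simpa [Γ] using hfin.mem_toFinset.mp hi
    refine Set.Subset.trans ?_ (closedBall_subset_cthickening hiS 1)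
    intro x hx
    rw [mem_closedBall, dist_pi_le_iff zero_le_one]
    intro k
    have h1 := (Set.mem_univ_pi.mp hx) k
    rw [Set.mem_Ico] at h1
    rw [Real.dist_eq, abs_le]
    constructor <;> [linarith [h1.1]; linarith [h1.2]]
  calc (Nat.card Γ : ℝ≥0∞) = ∑ i ∈ hfin.toFinset, volume (C i) := by
        simp only [hvol, Finset.sum_const, nsmul_eq_mul, mul_one]
        rw [Nat.card_coe_set_eq, Set.ncard_eq_toFinset_card _ hfin]
    _ = volume (⋃ i ∈ hfin.toFinset, C i) :=
        (measure_biUnion_finset hdisj fun i _ => hmeas i).symm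
    _ ≤ volume (Metric.cthickening 1 S) :=
        measure_mono (Set.iUnion₂_subset hsub)

private lemma aux_le_card {d : ℕ} {S : Set (Fin d → ℝ)} (hb : IsBounded S)
    (hne : S ≠ Set.univ) :
    volume (S \ Metric.cthickening 1 (frontier S))
      ≤ (Nat.card {i : Fin d → ℤ | (fun k => (i k : ℝ)) ∈ S} : ℝ≥0∞) := by
  classical
  have hfin := aux_finite hb
  set Γ := {i : Fin d → ℤ | (fun k => (i k : ℝ)) ∈ S}
  have hcover : S \ Metric.cthickening 1 (frontier S)
      ⊆ ⋃ i ∈ hfin.toFinset, closedBall (fun k => ((i k : ℤ) : ℝ)) (1/2) := by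
    rintro x ⟨hxS, hxth⟩
    set r : Fin d → ℤ := fun k => ⌊x k + 1/2⌋ with hr
    have hdist : dist x (fun k => ((r k : ℤ) : ℝ)) ≤ 1/2 := by
      rw [dist_pi_le_iff (by norm_num)]
      intro k
      have h1 : ((r k : ℤ) : ℝ) ≤ x k + 1/2 := Int.floor_le _
      have h2 : x k + 1/2 - 1 < ((r k : ℤ) : ℝ) := Int.sub_one_lt_floor _
      rw [Real.dist_eq, abs_le]
      constructor <;> linarith
    have hrS : (fun k => ((r k : ℤ) : ℝ)) ∈ S := by
      by_contra hrS
      have hle : Metric.infDist x Sᶜ ≤ 1/2 :=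
        (Metric.infDist_le_dist_of_mem (Set.mem_compl hrS)).trans hdist
      obtain ⟨y, hy, hxy⟩ := exists_mem_frontier_infDist_compl_eq_dist hxS hne
      exact hxth (Metric.mem_cthickening_of_dist_le x y 1 _ hy (by rw [← hxy]; linarith))
    exact Set.mem_biUnion (hfin.mem_toFinset.mpr hrS) (Metric.mem_closedBall.mpr hdist)
  calc volume (S \ Metric.cthickening 1 (frontier S))
      ≤ volume (⋃ i ∈ hfin.toFinset, closedBall (fun k => ((i k : ℤ) : ℝ)) (1/2)) :=
        measure_mono hcover
    _ ≤ ∑ i ∈ hfin.toFinset, volume (closedBall (fun k => ((i k : ℤ) : ℝ)) (1/2)) :=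
        measure_biUnion_finset_le _ _
    _ = (Nat.card Γ : ℝ≥0∞) := by
        have hball : ∀ i : Fin d → ℤ,
            volume (closedBall (fun k => ((i k : ℤ) : ℝ)) (1/2)) = 1 := by
          intro i
          rw [closedBall_pi _ (by norm_num : (0:ℝ) ≤ 1/2)]
          simp [MeasureTheory.volume_pi_pi, Real.volume_closedBall]
        simp only [hball, Finset.sum_const, nsmul_eq_mul, mul_one]
        rw [Nat.card_coe_set_eq, Set.ncard_eq_toFinset_card _ hfin]

private lemma aux_cthick_smul {d : ℕ} {c : ℝ} (hc : 0 < c) (δ : ℝ) (s : Set (Fin d → ℝ)) :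
    Metric.cthickening (c * δ) (c • s) = c • Metric.cthickening δ s := by
  ext x
  rw [Set.mem_smul_set_iff_inv_smul_mem₀ hc.ne', Metric.mem_cthickening_iff,
    Metric.mem_cthickening_iff]
  have hx : x = c • (c⁻¹ • x) := (smul_inv_smul₀ hc.ne' x).symm
  conv_lhs => rw [hx]
  rw [infEdist_smul₀ hc.ne' s]
  have hnn : ((‖c‖₊ : ℝ≥0) : ℝ≥0∞) = ENNReal.ofReal c := by
    rw [Real.nnnorm_of_nonneg hc.le, ENNReal.ofReal, Real.toNNReal_of_nonneg hc.le]
  rw [ENNReal.smul_def, smul_eq_mul, hnn, ENNReal.ofReal_mul hc.le]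
  exact ENNReal.mul_le_mul_iff_right (by simp [hc.ne', hc]) ENNReal.ofReal_ne_top

/-- For a regular Borel set `A ⊆ [0,1]^d` (`λ(∂A) = 0`) with `λ(A) > 0`, the discrete
boundary of `Γ_n(A) = nA ∩ ℤ^d` is negligible: `|∂Γ_n(A)|/|Γ_n(A)| → 0`. -/
theorem stmt_11 (d : ℕ) (hd : 1 ≤ d) (A : Set (Fin d → ℝ))
    (hA : A ⊆ Set.Icc 0 1) (hAmeas : MeasurableSet A)
    (hreg : volume (frontier A) = 0) (hpos : 0 < volume A) :
    Tendsto (fun n : ℕ =>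
        (Nat.card {i : Fin d → ℤ | (fun k => (i k : ℝ)) ∈ (n : ℝ) • A ∧
            ∃ j : Fin d → ℤ, ¬ (fun k => (j k : ℝ)) ∈ (n : ℝ) • A ∧ ‖i - j‖ = 1} : ℝ)
          / (Nat.card {i : Fin d → ℤ | (fun k => (i k : ℝ)) ∈ (n : ℝ) • A} : ℝ))
      atTop (nhds 0) := by
  classical
  set F : Set (Fin d → ℝ) := frontier A with hF
  have hA_bdd : IsBounded A := (Metric.isBounded_Icc (0 : Fin d → ℝ) 1).subset hA
  have hF_bdd : IsBounded F := hA_bdd.closure.subset frontier_subset_closure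
  have hvA_ne : volume A ≠ ⊤ :=
    ((measure_mono hA).trans_lt (isCompact_Icc.measure_lt_top)).ne
  have hcth_ne : ∀ r : ℝ, r ≤ 1 → volume (Metric.cthickening r F) ≠ ⊤ := by
    intro r hr
    have h1 : Metric.cthickening r F ⊆ Metric.cthickening 1 F := cthickening_mono hr F
    have h2 : IsCompact (Metric.cthickening 1 F) :=
      Metric.isCompact_of_isClosed_isBounded isClosed_cthickening hF_bdd.cthickening
    exact ((measure_mono h1).trans_lt h2.measure_lt_top).ne
  have hm0 : Tendsto (fun r => volume (Metric.cthickening r F)) (nhds 0) (nhds 0) := by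
    have := tendsto_measure_cthickening_of_isClosed
      ⟨1, one_pos, hcth_ne 1 le_rfl⟩ isClosed_frontier
    rwa [hreg] at this
  set μ2 : ℕ → ℝ := fun n => (volume (Metric.cthickening ((2 : ℝ) / n) F)).toReal with hμ2def
  set μ1 : ℕ → ℝ := fun n => (volume (Metric.cthickening ((1 : ℝ) / n) F)).toReal with hμ1def
  have hμ2 : Tendsto μ2 atTop (nhds 0) := by
    have h2n : Tendsto (fun n : ℕ => (2 : ℝ) / n) atTop (nhds 0) :=
      _root_.tendsto_const_div_atTop_nhds_zero_nat 2
    have hcomp := (ENNReal.tendsto_toReal (by simp)).comp (hm0.comp h2n)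
    simpa [hμ2def, Function.comp_def] using hcomp
  have hμ1 : Tendsto μ1 atTop (nhds 0) := by
    have h1n : Tendsto (fun n : ℕ => (1 : ℝ) / n) atTop (nhds 0) :=
      _root_.tendsto_const_div_atTop_nhds_zero_nat 1
    have hcomp := (ENNReal.tendsto_toReal (by simp)).comp (hm0.comp h1n)
    simpa [hμ1def, Function.comp_def] using hcomp
  set v : ℝ := (volume A).toReal with hv
  have hv_pos : 0 < v := ENNReal.toReal_pos hpos.ne' hvA_ne
  have hmain : ∀ n : ℕ, 2 ≤ n →
      (Nat.card {i : Fin d → ℤ | (fun k => (i k : ℝ)) ∈ (n : ℝ) • A ∧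
            ∃ j : Fin d → ℤ, ¬ (fun k => (j k : ℝ)) ∈ (n : ℝ) • A ∧ ‖i - j‖ = 1} : ℝ)
        ≤ (n : ℝ) ^ d * μ2 n ∧
      (n : ℝ) ^ d * v ≤
        (Nat.card {i : Fin d → ℤ | (fun k => (i k : ℝ)) ∈ (n : ℝ) • A} : ℝ)
          + (n : ℝ) ^ d * μ1 n := by
    intro n hn
    have hc : (0 : ℝ) < (n : ℝ) := by
      have : (0 : ℕ) < n := lt_of_lt_of_le (by norm_num) hn
      exact_mod_cast this
    have hc2 : (2 : ℝ) ≤ (n : ℝ) := by exact_mod_cast hn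
    have hSbdd : IsBounded ((n : ℝ) • A) := hA_bdd.smul₀ (n : ℝ)
    have hSne : (n : ℝ) • A ≠ Set.univ := by
      intro h
      have hmem : (fun _ : Fin d => (n : ℝ) + 1) ∈ (n : ℝ) • A := h ▸ Set.mem_univ _
      obtain ⟨a, haA, hEq⟩ := hmem
      have h1 := congrFun hEq ⟨0, hd⟩
      simp only [Pi.smul_apply, smul_eq_mul] at h1
      have h3 : a ⟨0, hd⟩ ≤ 1 := (hA haA).2 ⟨0, hd⟩
      have h4 : (0 : ℝ) ≤ a ⟨0, hd⟩ := (hA haA).1 ⟨0, hd⟩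
      nlinarith
    have hfront : frontier ((n : ℝ) • A) = (n : ℝ) • F := by
      have h1 := closure_smul₀' hc.ne' A
      have h2 := interior_smul₀ hc.ne' A
      calc frontier ((n : ℝ) • A) = closure ((n : ℝ) • A) \ interior ((n : ℝ) • A) := rfl
        _ = (n : ℝ) • closure A \ (n : ℝ) • interior A := by rw [h1, h2]
        _ = (n : ℝ) • (closure A \ interior A) := by
            rw [← Set.image_smul, ← Set.image_smul, ← Set.image_smul,
              Set.image_diff (MulAction.injective₀ hc.ne')]
        _ = (n : ℝ) • F := rfl
    constructor
    · -- upper bound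
      have hB_sub : {i : Fin d → ℤ | (fun k => (i k : ℝ)) ∈ (n : ℝ) • A ∧
            ∃ j : Fin d → ℤ, ¬ (fun k => (j k : ℝ)) ∈ (n : ℝ) • A ∧ ‖i - j‖ = 1}
          ⊆ {i : Fin d → ℤ |
              (fun k => (i k : ℝ)) ∈ Metric.cthickening 1 ((n : ℝ) • F)} := by
        rintro i ⟨hiA, j, hjA, hij⟩
        have hnormeq : dist (fun k => ((i k : ℤ) : ℝ)) (fun k => ((j k : ℤ) : ℝ)) = 1 := by
          rw [dist_eq_norm, ← hij]
          have h1 : ((fun k => ((i k : ℤ) : ℝ)) - fun k => ((j k : ℤ) : ℝ))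
              = fun k => (((i - j) k : ℤ) : ℝ) := by
            funext k
            simp [Pi.sub_apply]
          rw [h1, Pi.norm_def, Pi.norm_def]
          congr 1
        have hinf : Metric.infDist (fun k => ((i k : ℤ) : ℝ)) (((n : ℝ) • A)ᶜ) ≤ 1 :=
          hnormeq ▸ Metric.infDist_le_dist_of_mem hjA
        obtain ⟨y, hy, hxy⟩ := exists_mem_frontier_infDist_compl_eq_dist hiA hSne
        have hyF : y ∈ (n : ℝ) • F := hfront ▸ hy
        exact Metric.mem_cthickening_of_dist_le _ y 1 _ hyF (by rw [← hxy]; exact hinf)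
      have hΓ'fin : {i : Fin d → ℤ |
          (fun k => (i k : ℝ)) ∈ Metric.cthickening 1 ((n : ℝ) • F)}.Finite :=
        aux_finite ((hF_bdd.smul₀ (n : ℝ)).cthickening)
      have hcard1 : (Nat.card {i : Fin d → ℤ | (fun k => (i k : ℝ)) ∈ (n : ℝ) • A ∧
            ∃ j : Fin d → ℤ, ¬ (fun k => (j k : ℝ)) ∈ (n : ℝ) • A ∧ ‖i - j‖ = 1} : ℝ≥0∞)
          ≤ volume (Metric.cthickening 2 ((n : ℝ) • F)) := by
        calc (Nat.card {i : Fin d → ℤ | (fun k => (i k : ℝ)) ∈ (n : ℝ) • A ∧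
              ∃ j : Fin d → ℤ, ¬ (fun k => (j k : ℝ)) ∈ (n : ℝ) • A ∧ ‖i - j‖ = 1} : ℝ≥0∞)
            ≤ (Nat.card {i : Fin d → ℤ |
                (fun k => (i k : ℝ)) ∈ Metric.cthickening 1 ((n : ℝ) • F)} : ℝ≥0∞) := by
              exact_mod_cast Nat.card_mono hΓ'fin hB_sub
          _ ≤ volume (Metric.cthickening 1 (Metric.cthickening 1 ((n : ℝ) • F))) :=
              aux_card_le ((hF_bdd.smul₀ (n : ℝ)).cthickening)
          _ ≤ volume (Metric.cthickening 2 ((n : ℝ) • F)) := by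
              refine measure_mono ?_
              have h12 : (2:ℝ) = 1 + 1 := by norm_num
              rw [h12]
              exact Metric.cthickening_cthickening_subset zero_le_one zero_le_one _
      have hvol2 : volume (Metric.cthickening 2 ((n : ℝ) • F))
          = ENNReal.ofReal ((n : ℝ) ^ d) * volume (Metric.cthickening (2 / (n : ℝ)) F) := by
        have h2 : (n : ℝ) * (2 / (n : ℝ)) = 2 := by field_simp
        have hsc := aux_cthick_smul hc (2 / (n : ℝ)) F
        rw [h2] at hsc
        rw [hsc, Measure.addHaar_smul_of_nonneg volume hc.le, Module.finrank_fin_fun]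
      have h2c1 : 2 / (n : ℝ) ≤ 1 := by
        rw [div_le_one hc]; linarith
      have hne2 : ENNReal.ofReal ((n : ℝ) ^ d)
          * volume (Metric.cthickening (2 / (n : ℝ)) F) ≠ ⊤ :=
        ENNReal.mul_ne_top ENNReal.ofReal_ne_top (hcth_ne _ h2c1)
      rw [hvol2] at hcard1
      have := ENNReal.toReal_mono hne2 hcard1
      rw [ENNReal.toReal_mul, ENNReal.toReal_natCast,
        ENNReal.toReal_ofReal (by positivity)] at this
      exact this
    · -- lower bound
      have hlow1 : volume ((n : ℝ) • A)
          ≤ (Nat.card {i : Fin d → ℤ | (fun k => (i k : ℝ)) ∈ (n : ℝ) • A} : ℝ≥0∞)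
            + volume (Metric.cthickening 1 ((n : ℝ) • F)) := by
        calc volume ((n : ℝ) • A)
            ≤ volume (((n : ℝ) • A) \ Metric.cthickening 1 (frontier ((n : ℝ) • A)))
              + volume (Metric.cthickening 1 (frontier ((n : ℝ) • A))) :=
              (measure_mono (Set.subset_diff_union _ _)).trans (measure_union_le _ _)
          _ ≤ _ := by
              rw [hfront]
              have haux := aux_le_card hSbdd hSne
              rw [hfront] at haux
              exact add_le_add haux le_rfl
      have h1c : (n : ℝ) * (1 / (n : ℝ)) = 1 := by field_simp
      have hvol1 : volume (Metric.cthickening 1 ((n : ℝ) • F))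
          = ENNReal.ofReal ((n : ℝ) ^ d) * volume (Metric.cthickening (1 / (n : ℝ)) F) := by
        have hsc := aux_cthick_smul hc (1 / (n : ℝ)) F
        rw [h1c] at hsc
        rw [hsc, Measure.addHaar_smul_of_nonneg volume hc.le, Module.finrank_fin_fun]
      have hvolA : volume ((n : ℝ) • A) = ENNReal.ofReal ((n : ℝ) ^ d) * volume A := by
        rw [Measure.addHaar_smul_of_nonneg volume hc.le, Module.finrank_fin_fun]
      have h1c1 : 1 / (n : ℝ) ≤ 1 := by
        rw [div_le_one hc]; linarith
      rw [hvolA, hvol1] at hlow1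
      have hne3 : (Nat.card {i : Fin d → ℤ | (fun k => (i k : ℝ)) ∈ (n : ℝ) • A} : ℝ≥0∞)
          + ENNReal.ofReal ((n : ℝ) ^ d)
            * volume (Metric.cthickening (1 / (n : ℝ)) F) ≠ ⊤ :=
        ENNReal.add_ne_top.mpr ⟨ENNReal.natCast_ne_top _,
          ENNReal.mul_ne_top ENNReal.ofReal_ne_top (hcth_ne _ h1c1)⟩
      have := ENNReal.toReal_mono hne3 hlow1
      rw [ENNReal.toReal_add (ENNReal.natCast_ne_top _)
          (ENNReal.mul_ne_top ENNReal.ofReal_ne_top (hcth_ne _ h1c1)),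
        ENNReal.toReal_mul, ENNReal.toReal_mul, ENNReal.toReal_natCast,
        ENNReal.toReal_ofReal (by positivity)] at this
      exact this
  have hev : ∀ᶠ n : ℕ in atTop,
      (Nat.card {i : Fin d → ℤ | (fun k => (i k : ℝ)) ∈ (n : ℝ) • A ∧
            ∃ j : Fin d → ℤ, ¬ (fun k => (j k : ℝ)) ∈ (n : ℝ) • A ∧ ‖i - j‖ = 1} : ℝ)
          / (Nat.card {i : Fin d → ℤ | (fun k => (i k : ℝ)) ∈ (n : ℝ) • A} : ℝ)
        ≤ μ2 n / (v - μ1 n) := by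
    filter_upwards [eventually_ge_atTop 2,
      hμ1.eventually_lt_const (half_pos hv_pos)] with n hn hμ1n
    obtain ⟨hu, hl⟩ := hmain n hn
    have hcn : (0 : ℝ) < (n : ℝ) := by
      have : (0 : ℕ) < n := lt_of_lt_of_le (by norm_num) hn
      exact_mod_cast this
    have hpd : (0 : ℝ) < (n : ℝ) ^ d := by positivity
    have hδ : 0 < v - μ1 n := by linarith
    have hkpos : 0 < (n : ℝ) ^ d * (v - μ1 n) := by positivity
    have hbge : (n : ℝ) ^ d * (v - μ1 n)
        ≤ (Nat.card {i : Fin d → ℤ | (fun k => (i k : ℝ)) ∈ (n : ℝ) • A} : ℝ) := by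
      nlinarith
    calc (Nat.card {i : Fin d → ℤ | (fun k => (i k : ℝ)) ∈ (n : ℝ) • A ∧
            ∃ j : Fin d → ℤ, ¬ (fun k => (j k : ℝ)) ∈ (n : ℝ) • A ∧ ‖i - j‖ = 1} : ℝ)
          / (Nat.card {i : Fin d → ℤ | (fun k => (i k : ℝ)) ∈ (n : ℝ) • A} : ℝ)
        ≤ ((n : ℝ) ^ d * μ2 n) / ((n : ℝ) ^ d * (v - μ1 n)) :=
          div_le_div₀ (by positivity) hu hkpos hbge
      _ = μ2 n / (v - μ1 n) := mul_div_mul_left _ _ hpd.ne'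
  have hg : Tendsto (fun n => μ2 n / (v - μ1 n)) atTop (nhds 0) := by
    have := hμ2.div (tendsto_const_nhds.sub hμ1) (by simpa using hv_pos.ne')
    rw [zero_div] at this
    exact this
  exact squeeze_zero' (Eventually.of_forall fun n => by positivity) hev hg
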